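/- Let n ≥ 1 and let h : ℝ^n → ℝ be comonotonically additive and continuous. Then h is positively homogeneous: h(r x) = r h(x) for every real r > 0 and every x ∈ ℝ^n. -/

import Mathlib

open Finset

/-- The Choquet-type sum computed with a given permutation `π`:
`∑ i (v({π(i),…,π(n)}) − v({π(i+1),…,π(n)})) x_{π(i)}`. -/
noncomputable def choquetSum {n : ℕ} (v : Finset (Fin n) → ℝ) (π : Equiv.Perm (Fin n))
    (x : Fin n → ℝ) : ℝ :=
  ∑ i : Fin n,
    (v ((Finset.univ.filter fun k => i ≤ k).image π) -
      v ((Finset.univ.filter fun k => i < k).image π)) * x (π i)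

/-- The signed (discrete) Choquet integral of `x` w.r.t. the set function `v`,
computed with a sorting permutation of `x`. -/
noncomputable def signedChoquet {n : ℕ} (v : Finset (Fin n) → ℝ) (x : Fin n → ℝ) : ℝ :=
  choquetSum v (Tuple.sort x) x

/-- Two vectors are comonotonic. -/
def Comonotone' {n : ℕ} (x x' : Fin n → ℝ) : Prop :=
  ∀ i j, 0 ≤ (x i - x j) * (x' i - x' j)

/-- Characteristic (indicator) vector of `S`. -/
def indVec {n : ℕ} (S : Finset (Fin n)) : Fin n → ℝ := fun i => if i ∈ S then 1 else 0

/-- The unanimity game `v_S`. -/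
def unanimity {n : ℕ} (S T : Finset (Fin n)) : ℝ := if S ⊆ T then 1 else 0

/-- The Möbius transform of a set function. -/
noncomputable def mobius {n : ℕ} (v : Finset (Fin n) → ℝ) (S : Finset (Fin n)) : ℝ :=
  ∑ T ∈ S.powerset, (-1 : ℝ) ^ (S.card - T.card) * v T


/-- A comonotonically additive continuous function is positively
homogeneous. -/
theorem comonotoneAdditive_continuous_posHom {n : ℕ} (hn : 1 ≤ n)
    (h : (Fin n → ℝ) → ℝ)
    (hadd : ∀ x x' : Fin n → ℝ, Comonotone' x x' → h (x + x') = h x + h x')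
    (hcont : Continuous h) :
    ∀ r : ℝ, 0 < r → ∀ x : Fin n → ℝ,
      h (fun i => r * x i) = r * h x := by

  -- comonotonicity of two nonnegative scalings of the same vector
  have como : ∀ (c d : ℝ), 0 ≤ c → 0 ≤ d → ∀ x : Fin n → ℝ,
      Comonotone' (fun i => c * x i) (fun i => d * x i) := by
    intro c d hc hd x i j
    have : (c * x i - c * x j) * (d * x i - d * x j) = c * d * (x i - x j) ^ 2 := by ring
    rw [this]
    positivity
  have h0 : h 0 = 0 := by
    have := hadd 0 0 (fun i j => by simp)
    simp at this
    linarith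
  -- natural number homogeneity
  have hnat : ∀ (m : ℕ) (x : Fin n → ℝ), h (fun i => (m : ℝ) * x i) = m * h x := by
    intro m x
    induction m with
    | zero => simpa using (show (fun _ : Fin n => (0:ℝ)) = 0 from rfl) ▸ h0
    | succ k ih =>
        have hco := como (k : ℝ) 1 (by positivity) zero_le_one x
        have := hadd (fun i => (k : ℝ) * x i) (fun i => 1 * x i) hco
        have e1 : ((fun i => (k : ℝ) * x i) + fun i => 1 * x i)
            = fun i => ((k : ℕ) + 1 : ℝ) * x i := by
          funext i; simp [Pi.add_apply]; ring
        rw [e1] at this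
        have e2 : h (fun i => 1 * x i) = h x := by
          congr 1; funext i; ring_nf
        rw [e2, ih] at this
        push_cast
        linarith
  -- rational-like homogeneity: a / m for naturals
  have hdiv : ∀ (a m : ℕ), 0 < m → ∀ x : Fin n → ℝ,
      h (fun i => ((a : ℝ) / m) * x i) = ((a : ℝ) / m) * h x := by
    intro a m hm x
    have hm' : (0:ℝ) < m := by exact_mod_cast hm
    have key : h (fun i => (m : ℝ) * (((a : ℝ) / m) * x i))
        = (m : ℝ) * h (fun i => ((a : ℝ) / m) * x i) := hnat m _
    have e : (fun i => (m : ℝ) * (((a : ℝ) / m) * x i)) = fun i => (a : ℝ) * x i := by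
      funext i; field_simp
    rw [e, hnat a x] at key
    have : h (fun i => ((a : ℝ) / m) * x i) = (a : ℝ) * h x / m := by
      rw [eq_div_iff hm'.ne']
      linarith
    rw [this]
    ring
  intro r hr x
  -- approximate r by ⌊r * k⌋₊ / k
  have htend : Filter.Tendsto (fun k : ℕ => (⌊r * k⌋₊ : ℝ) / k) Filter.atTop (nhds r) :=
    (tendsto_nat_floor_mul_div_atTop hr.le).comp tendsto_natCast_atTop_atTop
  have t1 : Filter.Tendsto (fun k : ℕ => h (fun i => ((⌊r * k⌋₊ : ℝ) / k) * x i))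
      Filter.atTop (nhds (h (fun i => r * x i))) := by
    apply (hcont.tendsto _).comp
    apply tendsto_pi_nhds.2
    intro i
    exact (htend.mul_const (x i))
  have t2 : Filter.Tendsto (fun k : ℕ => ((⌊r * k⌋₊ : ℝ) / k) * h x)
      Filter.atTop (nhds (r * h x)) := htend.mul_const _
  have heq : ∀ᶠ k : ℕ in Filter.atTop,
      h (fun i => ((⌊r * k⌋₊ : ℝ) / k) * x i) = ((⌊r * k⌋₊ : ℝ) / k) * h x := by
    filter_upwards [Filter.eventually_gt_atTop 0] with k hk
    exact hdiv _ k hk x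
  exact tendsto_nhds_unique (t1.congr' heq) t2
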